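/- For every q with 1 ≤ q < 3/2 and every R > 0, the function x ↦ |x|^{−q} |x'|^{−q} is integrable on the ball B_R(0) ⊂ ℝ³: ∫_{B_R(0)} |x|^{−q} |x'|^{−q} dx < ∞. Consequently, any measurable function T on ℝ³ satisfying |T(x)| ≤ C/(|x||x'|) almost everywhere, for some constant C, belongs to L^q_loc(ℝ³) for every 1 ≤ q < 3/2. -/

import Mathlib

open MeasureTheory Set
open scoped ENNReal NNReal

noncomputable def primeNorm3 (x : EuclideanSpace ℝ (Fin 3)) : ℝ :=
  Real.sqrt (x 0 ^ 2 + x 1 ^ 2)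

lemma oneDim {c R : ℝ} (hc1 : c < 1) (hR : 0 < R) :
    Integrable ((Set.Ioc (-R) R).indicator (fun t : ℝ => |t| ^ (-c))) := by
  rw [integrable_indicator_iff measurableSet_Ioc]
  rw [← intervalIntegrable_iff_integrableOn_Ioc_of_le (by linarith : -R ≤ R)]
  have h1 : IntervalIntegrable (fun t : ℝ => |t| ^ (-c)) volume 0 R := by
    apply (intervalIntegral.intervalIntegrable_rpow' (a := 0) (b := R) (r := -c)
      (by linarith)).congr
    intro t ht; dsimp only
    rw [Set.uIoc_of_le hR.le] at ht
    rw [abs_of_pos ht.1]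
  have h2 : IntervalIntegrable (fun t : ℝ => |t| ^ (-c)) volume (-R) 0 := by
    rw [IntervalIntegrable.iff_comp_neg]
    simp only [abs_neg, neg_neg, neg_zero]
    exact h1.symm
  exact h2.trans h1

lemma coord_ae (i : Fin 3) : ∀ᵐ x : EuclideanSpace ℝ (Fin 3), x i ≠ 0 := by
  set φ : EuclideanSpace ℝ (Fin 3) →ₗ[ℝ] ℝ :=
    (LinearMap.proj i).comp (WithLp.linearEquiv 2 ℝ (Fin 3 → ℝ)).toLinearMap with hφ
  rw [ae_iff]
  simp only [not_not, ne_eq, not_ne_iff]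
  rw [show {x : EuclideanSpace ℝ (Fin 3) | x i = 0} = (LinearMap.ker φ : Set _) from rfl]
  apply MeasureTheory.Measure.addHaar_submodule
  intro h
  have h1 : EuclideanSpace.single i (1:ℝ) ∈ LinearMap.ker φ := h ▸ Submodule.mem_top
  have : (EuclideanSpace.single i (1:ℝ)) i = 0 := h1
  simp [EuclideanSpace.single_apply] at this

lemma coord_le_norm (x : EuclideanSpace ℝ (Fin 3)) (i : Fin 3) : |x i| ≤ ‖x‖ := by
  rw [EuclideanSpace.norm_eq, ← Real.sqrt_sq_eq_abs]
  apply Real.sqrt_le_sqrt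
  rw [Fin.sum_univ_three]
  fin_cases i <;> simp [Real.norm_eq_abs, sq_abs] <;>
    nlinarith [sq_nonneg (x 0), sq_nonneg (x 1), sq_nonneg (x 2)]

lemma prime_le_norm (x : EuclideanSpace ℝ (Fin 3)) : primeNorm3 x ≤ ‖x‖ := by
  rw [EuclideanSpace.norm_eq, primeNorm3]
  apply Real.sqrt_le_sqrt
  rw [Fin.sum_univ_three]
  simp [Real.norm_eq_abs, sq_abs]
  positivity

lemma key (q : ℝ) (hq1 : 1 ≤ q) (hq2 : q < 3/2) (R : ℝ) (hR : 0 < R) :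
    (∫⁻ x in Metric.ball (0 : EuclideanSpace ℝ (Fin 3)) R,
      ENNReal.ofReal (‖x‖ ^ (-q) * primeNorm3 x ^ (-q))) < ⊤ := by
  set c : ℝ := q / 2 + 1 / 4 with hc
  set a : ℝ := q - 1 / 2 with ha
  set g0 : ℝ → ℝ := (Set.Ioc (-R) R).indicator (fun t : ℝ => |t| ^ (-c)) with hg0
  set g2 : ℝ → ℝ := (Set.Ioc (-R) R).indicator (fun t : ℝ => |t| ^ (-a)) with hg2
  set G : Fin 3 → ℝ → ℝ := ![g0, g0, g2] with hG
  set F : (Fin 3 → ℝ) → ℝ := fun y => ∏ i, G i (y i) with hF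
  have hint : Integrable F := by
    apply Integrable.fin_nat_prod
    intro i
    fin_cases i
    · exact oneDim (by rw [hc]; linarith) hR
    · exact oneDim (by rw [hc]; linarith) hR
    · exact oneDim (by rw [ha]; linarith) hR
  have hlin : (∫⁻ y : Fin 3 → ℝ, ENNReal.ofReal (F y)) < ⊤ := hint.lintegral_lt_top
  have e := EuclideanSpace.volume_preserving_symm_measurableEquiv_toLp (Fin 3)
  have htrans : (∫⁻ x : EuclideanSpace ℝ (Fin 3),
      ENNReal.ofReal (F ((MeasurableEquiv.toLp 2 (Fin 3 → ℝ)).symm x)))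
      = ∫⁻ y : Fin 3 → ℝ, ENNReal.ofReal (F y) :=
    e.lintegral_comp_emb (MeasurableEquiv.toLp 2 (Fin 3 → ℝ)).symm.measurableEmbedding (fun y => ENNReal.ofReal (F y))
  have hae : ∀ᵐ x : EuclideanSpace ℝ (Fin 3)
      ∂(volume.restrict (Metric.ball (0 : EuclideanSpace ℝ (Fin 3)) R)),
      ENNReal.ofReal (‖x‖ ^ (-q) * primeNorm3 x ^ (-q)) ≤
        ENNReal.ofReal (F ((MeasurableEquiv.toLp 2 (Fin 3 → ℝ)).symm x)) := by
    filter_upwards [ae_restrict_mem Metric.isOpen_ball.measurableSet,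
      ae_restrict_of_ae (coord_ae 0), ae_restrict_of_ae (coord_ae 1),
      ae_restrict_of_ae (coord_ae 2)] with x hx h0 h1 h2
    apply ENNReal.ofReal_le_ofReal
    have hxR : ‖x‖ < R := by simpa [Metric.mem_ball] using hx
    have hex : ∀ i, ((MeasurableEquiv.toLp 2 (Fin 3 → ℝ)).symm x) i = x i := fun i => rfl
    have hmem : ∀ i, x i ∈ Set.Ioc (-R) R := by
      intro i
      have := (abs_le.1 ((coord_le_norm x i).trans hxR.le))
      constructor
      · have : |x i| < R := lt_of_le_of_lt (coord_le_norm x i) hxR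
        linarith [neg_abs_le (x i), abs_nonneg (x i), (abs_lt.1 this).1]
      · exact this.2
    have hFval : F ((MeasurableEquiv.toLp 2 (Fin 3 → ℝ)).symm x)
        = |x 0| ^ (-c) * |x 1| ^ (-c) * |x 2| ^ (-a) := by
      rw [hF]
      simp only [hex]
      rw [Fin.prod_univ_three]
      simp only [hG, Matrix.cons_val_zero, Matrix.cons_val_one, Matrix.head_cons,
        Matrix.cons_val_two, Matrix.tail_cons]
      rw [hg0, hg2, Set.indicator_of_mem (hmem 0), Set.indicator_of_mem (hmem 1),
        Set.indicator_of_mem (hmem 2)]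
    rw [hFval]
    -- now the pointwise real inequality
    set s : ℝ := primeNorm3 x with hs
    have hs0 : 0 < s := by
      rw [hs, primeNorm3]
      apply Real.sqrt_pos.2
      positivity
    have hsn : s ≤ ‖x‖ := prime_le_norm x
    have hn0 : 0 < ‖x‖ := lt_of_lt_of_le hs0 hsn
    have ht0 : 0 < |x 2| := abs_pos.2 h2
    have htn : |x 2| ≤ ‖x‖ := coord_le_norm x 2
    have hmul : |x 0| * |x 1| ≤ s ^ 2 := by
      rw [hs, primeNorm3, Real.sq_sqrt (by positivity)]
      nlinarith [sq_abs (x 0), sq_abs (x 1), sq_nonneg (|x 0| - |x 1|)]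
    have hmul0 : 0 < |x 0| * |x 1| := mul_pos (abs_pos.2 h0) (abs_pos.2 h1)
    have step1 : ‖x‖ ^ (-q) = ‖x‖ ^ (-a) * ‖x‖ ^ (-(1/2 : ℝ)) := by
      rw [← Real.rpow_add hn0, ha]; ring_nf
    have step2 : ‖x‖ ^ (-a) ≤ |x 2| ^ (-a) :=
      Real.rpow_le_rpow_of_nonpos ht0 htn (by rw [ha]; linarith)
    have step3 : ‖x‖ ^ (-(1/2 : ℝ)) ≤ s ^ (-(1/2 : ℝ)) :=
      Real.rpow_le_rpow_of_nonpos hs0 hsn (by norm_num)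
    have step4 : s ^ (-(1/2 : ℝ)) * s ^ (-q) = s ^ (-(q + 1/2)) := by
      rw [← Real.rpow_add hs0]; ring_nf
    have step5 : s ^ (-(q + 1/2)) ≤ |x 0| ^ (-c) * |x 1| ^ (-c) := by
      have h25 : s ^ (-(q + 1/2)) = (s ^ 2) ^ (-c) := by
        rw [← Real.rpow_natCast s 2, ← Real.rpow_mul hs0.le]
        norm_num [hc]
        ring_nf
      rw [h25, ← Real.mul_rpow (abs_nonneg _) (abs_nonneg _)]
      exact Real.rpow_le_rpow_of_nonpos hmul0 hmul (by rw [hc]; linarith)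
    calc ‖x‖ ^ (-q) * s ^ (-q)
        ≤ (|x 2| ^ (-a) * s ^ (-(1/2:ℝ))) * s ^ (-q) := by
          rw [step1]
          apply mul_le_mul_of_nonneg_right _ (Real.rpow_nonneg hs0.le _)
          exact mul_le_mul step2 step3 (Real.rpow_nonneg hn0.le _)
            (Real.rpow_nonneg ht0.le _)
      _ = |x 2| ^ (-a) * s ^ (-(q + 1/2)) := by rw [mul_assoc, step4]
      _ ≤ |x 2| ^ (-a) * (|x 0| ^ (-c) * |x 1| ^ (-c)) :=
          mul_le_mul_of_nonneg_left step5 (Real.rpow_nonneg ht0.le _)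
      _ = |x 0| ^ (-c) * |x 1| ^ (-c) * |x 2| ^ (-a) := by ring
  calc (∫⁻ x in Metric.ball (0 : EuclideanSpace ℝ (Fin 3)) R,
        ENNReal.ofReal (‖x‖ ^ (-q) * primeNorm3 x ^ (-q)))
      ≤ ∫⁻ x in Metric.ball (0 : EuclideanSpace ℝ (Fin 3)) R,
        ENNReal.ofReal (F ((MeasurableEquiv.toLp 2 (Fin 3 → ℝ)).symm x)) :=
        lintegral_mono_ae hae
    _ ≤ ∫⁻ x, ENNReal.ofReal (F ((MeasurableEquiv.toLp 2 (Fin 3 → ℝ)).symm x)) :=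
        setLIntegral_le_lintegral _ _
    _ = ∫⁻ y : Fin 3 → ℝ, ENNReal.ofReal (F y) := htrans
    _ < ⊤ := hlin

/-- For `1 ≤ q < 3/2` the function `|x|^{-q}|x'|^{-q}` is integrable on every ball
`B_R(0) ⊂ ℝ³`; consequently any measurable `T` with `|T(x)| ≤ C/(|x||x'|)` a.e.
belongs to `L^q_loc(ℝ³)`. -/
theorem stmt12 :
    (∀ q : ℝ, 1 ≤ q → q < 3 / 2 → ∀ R : ℝ, 0 < R →
      (∫⁻ x in Metric.ball (0 : EuclideanSpace ℝ (Fin 3)) R,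
        ENNReal.ofReal (‖x‖ ^ (-q) * primeNorm3 x ^ (-q))) < ⊤) ∧
    (∀ T : EuclideanSpace ℝ (Fin 3) → ℝ, Measurable T → ∀ C : ℝ,
      (∀ᵐ x : EuclideanSpace ℝ (Fin 3), |T x| ≤ C / (‖x‖ * primeNorm3 x)) →
      ∀ q : ℝ, 1 ≤ q → q < 3 / 2 → ∀ R : ℝ, 0 < R →
        MemLp T (ENNReal.ofReal q)
          (MeasureTheory.volume.restrict (Metric.ball (0 : EuclideanSpace ℝ (Fin 3)) R))) := by
  constructor
  · exact fun q hq1 hq2 R hR => key q hq1 hq2 R hR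
  · intro T hT C hTC q hq1 hq2 R hR
    have hq0 : (0:ℝ) ≤ q := by linarith
    have hp0 : ENNReal.ofReal q ≠ 0 := by
      simp only [ne_eq, ENNReal.ofReal_eq_zero, not_le]; linarith
    have hpt : ENNReal.ofReal q ≠ ⊤ := ENNReal.ofReal_ne_top
    refine ⟨hT.aestronglyMeasurable, ?_⟩
    rw [eLpNorm_lt_top_iff_lintegral_rpow_enorm_lt_top hp0 hpt,
      ENNReal.toReal_ofReal hq0]
    have hae : ∀ᵐ x : EuclideanSpace ℝ (Fin 3)
        ∂(volume.restrict (Metric.ball (0 : EuclideanSpace ℝ (Fin 3)) R)),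
        (‖T x‖₊ : ℝ≥0∞) ^ q ≤
          ENNReal.ofReal (|C| ^ q) *
            ENNReal.ofReal (‖x‖ ^ (-q) * primeNorm3 x ^ (-q)) := by
      filter_upwards [ae_restrict_of_ae hTC, ae_restrict_of_ae (coord_ae 0)]
        with x hx h0
      have hs0 : 0 < primeNorm3 x := by
        rw [primeNorm3]; apply Real.sqrt_pos.2; positivity
      have hn0 : 0 < ‖x‖ := lt_of_lt_of_le hs0 (prime_le_norm x)
      have hd0 : 0 < ‖x‖ * primeNorm3 x := mul_pos hn0 hs0
      have hx'' : |T x| ≤ |C| / (‖x‖ * primeNorm3 x) :=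
        hx.trans (by gcongr; exact le_abs_self C)
      have h1 : (‖T x‖₊ : ℝ≥0∞) = ENNReal.ofReal |T x| := by
        rw [← Real.norm_eq_abs, ofReal_norm, enorm_eq_nnnorm]
      rw [h1]
      calc (ENNReal.ofReal |T x|) ^ q
          ≤ (ENNReal.ofReal (|C| / (‖x‖ * primeNorm3 x))) ^ q := by
            gcongr
        _ = ENNReal.ofReal ((|C| / (‖x‖ * primeNorm3 x)) ^ q) := by
            rw [ENNReal.ofReal_rpow_of_nonneg (by positivity) hq0]
        _ = ENNReal.ofReal (|C| ^ q * (‖x‖ ^ (-q) * primeNorm3 x ^ (-q))) := by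
            congr 1
            rw [Real.div_rpow (abs_nonneg _) hd0.le, div_eq_mul_inv,
              ← Real.rpow_neg hd0.le, Real.mul_rpow hn0.le hs0.le]
        _ = ENNReal.ofReal (|C| ^ q) *
              ENNReal.ofReal (‖x‖ ^ (-q) * primeNorm3 x ^ (-q)) := by
            rw [ENNReal.ofReal_mul (by positivity)]
    calc (∫⁻ x in Metric.ball (0 : EuclideanSpace ℝ (Fin 3)) R, (‖T x‖₊ : ℝ≥0∞) ^ q)
        ≤ ∫⁻ x in Metric.ball (0 : EuclideanSpace ℝ (Fin 3)) R,
            ENNReal.ofReal (|C| ^ q) *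
              ENNReal.ofReal (‖x‖ ^ (-q) * primeNorm3 x ^ (-q)) :=
          lintegral_mono_ae hae
      _ = ENNReal.ofReal (|C| ^ q) *
            ∫⁻ x in Metric.ball (0 : EuclideanSpace ℝ (Fin 3)) R,
              ENNReal.ofReal (‖x‖ ^ (-q) * primeNorm3 x ^ (-q)) :=
          lintegral_const_mul' _ _ ENNReal.ofReal_ne_top
      _ < ⊤ := ENNReal.mul_lt_top ENNReal.ofReal_lt_top (key q hq1 hq2 R hR)
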